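/- Let (a_n)_{n≥1} be a sequence of positive reals with δ := a₁ + Σ_{n=1}^∞ a_{n+1}/a_n ≤ 1/4. Define M₁ = 2⌈1/(2a₁)⌉ and M_{n+1} = 2⌈1/(2 M₁⋯M_n a_{n+1})⌉ for n ≥ 1. Then a_n/2 ≤ 1/(M₁⋯M_n) ≤ a_n for all n ≥ 1. -/

import Mathlib

theorem stmt11 (a : ℕ → ℝ) (hpos : ∀ n ≥ 1, 0 < a n)
    (hsum : Summable (fun n : ℕ => a (n + 2) / a (n + 1)))
    (hδ : a 1 + ∑' n : ℕ, a (n + 2) / a (n + 1) ≤ 1/4)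
    (M : ℕ → ℕ)
    (hM1 : M 1 = 2 * ⌈1 / (2 * a 1)⌉₊)
    (hMrec : ∀ n ≥ 1, M (n + 1) =
      2 * ⌈1 / (2 * (∏ i ∈ Finset.Icc 1 n, (M i : ℝ)) * a (n + 1))⌉₊) :
    ∀ n ≥ 1, a n / 2 ≤ 1 / (∏ i ∈ Finset.Icc 1 n, (M i : ℝ)) ∧
      1 / (∏ i ∈ Finset.Icc 1 n, (M i : ℝ)) ≤ a n := by
  have ha1 : 0 < a 1 := hpos 1 le_rfl
  have htn : 0 ≤ ∑' n : ℕ, a (n + 2) / a (n + 1) :=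
    tsum_nonneg fun n => le_of_lt (div_pos (hpos _ (by omega)) (hpos _ (by omega)))
  have ha1q : a 1 ≤ 1/4 := by linarith
  have hratio : ∀ n ≥ 1, a (n+1) ≤ a n / 4 := by
    intro n hn
    obtain ⟨k, rfl⟩ : ∃ k, n = k + 1 := ⟨n - 1, by omega⟩
    have hterm := Summable.le_tsum hsum k
      (fun j _ => le_of_lt (div_pos (hpos _ (by omega)) (hpos _ (by omega))))
    have h1 : a (k+2) / a (k+1) ≤ 1/4 := by linarith
    have hp := hpos (k+1) (by omega)
    rw [div_le_iff₀ hp] at h1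
    show a (k+2) ≤ a (k+1) / 4
    linarith
  intro n hn
  induction n, hn using Nat.le_induction with
  | base =>
    rw [Finset.Icc_self, Finset.prod_singleton, hM1]
    push_cast
    set c : ℝ := (⌈1 / (2 * a 1)⌉₊ : ℝ) with hc
    have h1 : 1 / (2 * a 1) ≤ c := Nat.le_ceil _
    have h2 : c < 1 / (2 * a 1) + 1 := by
      exact_mod_cast Nat.ceil_lt_add_one (by positivity : (0:ℝ) ≤ 1 / (2 * a 1))
    have hcp : 0 < c := lt_of_lt_of_le (by positivity) h1
    have key : 1 / (2 * a 1) * (2 * a 1) = 1 := by field_simp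
    constructor
    · rw [div_le_div_iff₀ (by norm_num) (by positivity : (0:ℝ) < 2 * c)]
      nlinarith [mul_lt_mul_of_pos_right h2 (by positivity : (0:ℝ) < 2 * a 1)]
    · rw [div_le_iff₀ (by positivity : (0:ℝ) < 2 * c)]
      nlinarith [mul_le_mul_of_nonneg_right h1 (by positivity : (0:ℝ) ≤ 2 * a 1)]
  | succ n hn ih =>
    obtain ⟨ihl, ihr⟩ := ih
    set P : ℝ := ∏ i ∈ Finset.Icc 1 n, (M i : ℝ) with hP
    have han : 0 < a n := hpos n hn
    have han1 : 0 < a (n+1) := hpos (n+1) (by omega)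
    have hPpos : 0 < P := by
      rcases lt_trichotomy P 0 with h | h | h
      · have : 1 / P < 0 := div_neg_of_pos_of_neg one_pos h
        linarith
      · rw [h] at ihl; simp at ihl; linarith
      · exact h
    have hPa2 : a n * P ≤ 1 * 2 := (div_le_div_iff₀ (by norm_num) hPpos).mp ihl
    have hPa1 : 1 ≤ a n * P := by
      have := (div_le_iff₀ hPpos).mp ihr
      linarith [this]
    have hrat := hratio n hn
    rw [Finset.prod_Icc_succ_top (by omega : 1 ≤ n + 1), ← hP, hMrec n hn, ← hP]
    push_cast
    set c : ℝ := (⌈1 / (2 * P * a (n+1))⌉₊ : ℝ) with hc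
    have h1 : 1 / (2 * P * a (n+1)) ≤ c := Nat.le_ceil _
    have h2 : c < 1 / (2 * P * a (n+1)) + 1 := by
      exact_mod_cast Nat.ceil_lt_add_one (by positivity : (0:ℝ) ≤ 1 / (2 * P * a (n+1)))
    have hcp : 0 < c := lt_of_lt_of_le (by positivity) h1
    have key : 1 / (2 * P * a (n+1)) * (2 * P * a (n+1)) = 1 := by field_simp
    constructor
    · rw [div_le_div_iff₀ (by norm_num) (by positivity : (0:ℝ) < P * (2 * c))]
      have hh := mul_lt_mul_of_pos_right h2 (by positivity : (0:ℝ) < 2 * P * a (n+1))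
      nlinarith [mul_le_mul_of_nonneg_left hrat hPpos.le]
    · rw [div_le_iff₀ (by positivity : (0:ℝ) < P * (2 * c))]
      nlinarith [mul_le_mul_of_nonneg_right h1 (by positivity : (0:ℝ) ≤ 2 * P * a (n+1))]
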